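/- Let M be a finite satisfiable cyclic multipath (a finite weighted constraint graph connecting n boundary variables on each of its two ends, ends identified by variable index) of length ℓ, and let G be its collapse (the composition of its constituent constraints). If the infinite iteration (G)^ω is satisfiable over ℤ, then (M)^ω is satisfiable over ℤ. -/
import Mathlib


/-- Constraint evaluation for an arc with strictness flag. -/
def CmpB {n : ℕ} (σ τ : Fin n → ℤ) (u v : Fin n ⊕ Fin n) (b : Bool) : Prop :=
  if b then Sum.elim σ τ v < Sum.elim σ τ u else Sum.elim σ τ v ≤ Sum.elim σ τ u

/-- Satisfaction of a monotonicity constraint by a pair of assignments. -/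
def MCSat {n : ℕ} (G : (Fin n ⊕ Fin n) → (Fin n ⊕ Fin n) → Bool → Prop)
    (σ τ : Fin n → ℤ) : Prop :=
  ∀ u v b, G u v b → CmpB σ τ u v b

namespace Stmt19Aux

/-- The node of the level graph corresponding to a boundary-pair variable at step `t`. -/
def emb {n : ℕ} (t : ℕ) : (Fin n ⊕ Fin n) → ℕ × Fin n :=
  Sum.elim (fun i => (t, i)) (fun i => (t + 1, i))

/-- An arc of one copy of the multipath, as an edge between level-graph nodes.
`Edge ℓ Gs x y b` means the constraints entail `val y ≤ val x - b`. -/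
def Edge {n : ℕ} (ℓ : ℕ) (Gs : ℕ → (Fin n ⊕ Fin n) → (Fin n ⊕ Fin n) → Bool → Prop)
    (x y : ℕ × Fin n) (b : Bool) : Prop :=
  ∃ t, t < ℓ ∧ ∃ u v, Gs t u v b ∧ x = emb t u ∧ y = emb t v

/-- Chains of edges; the natural number records the number of strict arcs. -/
inductive Reach {n : ℕ} (ℓ : ℕ) (Gs : ℕ → (Fin n ⊕ Fin n) → (Fin n ⊕ Fin n) → Bool → Prop) :
    ℕ × Fin n → ℕ × Fin n → ℕ → Prop
  | refl (x) : Reach ℓ Gs x x 0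
  | step {x y z : ℕ × Fin n} {d : ℕ} {b : Bool} :
      Reach ℓ Gs x y d → Edge ℓ Gs y z b → Reach ℓ Gs x z (d + cond b 1 0)

lemma cmp_le {n : ℕ} {σ τ : Fin n → ℤ} {u v : Fin n ⊕ Fin n} {b : Bool}
    (h : CmpB σ τ u v b) :
    Sum.elim σ τ v + ((cond b 1 0 : ℕ) : ℤ) ≤ Sum.elim σ τ u := by
  cases b <;> simp [CmpB] at h <;> simp <;> omega

lemma elim_emb {n : ℕ} (ρ : ℕ → Fin n → ℤ) (t : ℕ) (w : Fin n ⊕ Fin n) :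
    Sum.elim (ρ t) (ρ (t + 1)) w = ρ (emb t w).1 (emb t w).2 := by
  cases w <;> rfl

lemma reach_bound {n ℓ : ℕ} {Gs : ℕ → (Fin n ⊕ Fin n) → (Fin n ⊕ Fin n) → Bool → Prop}
    (ρ : ℕ → Fin n → ℤ) (hρ : ∀ t < ℓ, MCSat (Gs t) (ρ t) (ρ (t + 1)))
    {x y : ℕ × Fin n} {d : ℕ} (h : Reach ℓ Gs x y d) :
    ρ y.1 y.2 + d ≤ ρ x.1 x.2 := by
  induction h with
  | refl => simp
  | step hr he ih =>
    obtain ⟨t, ht, u, v, hG, hy, hz⟩ := he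
    have hc := cmp_le (hρ t ht u v _ hG)
    rw [elim_emb, elim_emb, ← hy, ← hz] at hc
    push_cast
    push_cast at hc ih
    linarith

end Stmt19Aux

open Stmt19Aux in
/-- Let M = G₁ … G_ℓ be a finite satisfiable cyclic multipath (constituents
`Gs 0, …, Gs (ℓ−1)`), and let `Gcol` be its collapse: the (consequence-closed)
constraint containing exactly those order constraints entailed by M between its
two ends. If (Gcol)^ω is satisfiable over ℤ, then (M)^ω is satisfiable over ℤ. -/
theorem stmt_19 (n ℓ : ℕ) (hℓ : 1 ≤ ℓ)
    (Gs : ℕ → (Fin n ⊕ Fin n) → (Fin n ⊕ Fin n) → Bool → Prop)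
    (hsatM : ∃ ρ : ℕ → Fin n → ℤ, ∀ t < ℓ, MCSat (Gs t) (ρ t) (ρ (t + 1)))
    (Gcol : (Fin n ⊕ Fin n) → (Fin n ⊕ Fin n) → Bool → Prop)
    (hcol : ∀ u v b, Gcol u v b ↔
      ∀ ρ : ℕ → Fin n → ℤ, (∀ t < ℓ, MCSat (Gs t) (ρ t) (ρ (t + 1))) →
        CmpB (ρ 0) (ρ ℓ) u v b)
    (hω : ∃ σ : ℕ → Fin n → ℤ, ∀ k, MCSat Gcol (σ k) (σ (k + 1))) :
    ∃ ρ : ℕ → Fin n → ℤ, ∀ t, MCSat (Gs (t % ℓ)) (ρ t) (ρ (t + 1)) := by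
  rcases Nat.eq_zero_or_pos n with hn | hn
  · subst hn
    refine ⟨fun _ i => i.elim0, ?_⟩
    intro t u v b h
    rcases u with i | i <;> exact i.elim0
  obtain ⟨ρ0, hρ0⟩ := hsatM
  obtain ⟨σ, hσ⟩ := hω
  -- a bounded satisfying assignment of one copy of M
  set ρh : ℕ → Fin n → ℤ := fun t => ρ0 (min t ℓ) with hρhdef
  have hρhsat : ∀ t < ℓ, MCSat (Gs t) (ρh t) (ρh (t + 1)) := by
    intro t ht
    have h1 : min t ℓ = t := min_eq_left (le_of_lt ht)
    have h2 : min (t + 1) ℓ = t + 1 := min_eq_left (Nat.succ_le_of_lt ht)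
    simpa only [hρhdef, h1, h2] using hρ0 t ht
  have hne : (Finset.univ : Finset (Fin (ℓ + 1) × Fin n)).Nonempty :=
    ⟨(⟨0, by omega⟩, ⟨0, hn⟩), Finset.mem_univ _⟩
  set F : Fin (ℓ + 1) × Fin n → ℤ := fun p => ρ0 p.1 p.2 with hFdef
  set hi := Finset.univ.sup' hne F with hhidef
  set lo := Finset.univ.inf' hne F with hlodef
  have hbound : ∀ t i, lo ≤ ρh t i ∧ ρh t i ≤ hi := by
    intro t i
    have hlt : min t ℓ < ℓ + 1 := Nat.lt_succ_of_le (min_le_right _ _)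
    have he : ρh t i = F (⟨min t ℓ, hlt⟩, i) := rfl
    refine ⟨?_, ?_⟩
    · rw [he]; exact Finset.inf'_le F (Finset.mem_univ _)
    · rw [he]; exact Finset.le_sup' F (Finset.mem_univ _)
  set R : ℤ := hi - lo with hRdef
  have hR0 : 0 ≤ R := by
    have h1 := (hbound 0 ⟨0, hn⟩).1
    have h2 := (hbound 0 ⟨0, hn⟩).2
    have : lo ≤ hi := le_trans h1 h2
    omega
  have hdR : ∀ {x y : ℕ × Fin n} {d : ℕ}, Reach ℓ Gs x y d → (d : ℤ) ≤ R := by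
    intro x y d h
    have h1 := reach_bound ρh hρhsat h
    have h2 := (hbound x.1 x.2).2
    have h3 := (hbound y.1 y.2).1
    have : (d : ℤ) ≤ hi - lo := by linarith
    omega
  set C : ℤ := R + 1 with hCdef
  have hC0 : 0 < C := by omega
  set sval : ℕ → (Fin n ⊕ Fin n) → ℤ := fun k u => C * Sum.elim (σ k) (σ (k + 1)) u with hsvaldef
  have hsval_eq : ∀ k u, sval k u = C * Sum.elim (σ k) (σ (k + 1)) u := fun _ _ => rfl
  have hneu : (Finset.univ : Finset (Fin n ⊕ Fin n)).Nonempty :=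
    ⟨Sum.inl ⟨0, hn⟩, Finset.mem_univ _⟩
  set BIG : ℕ → ℤ := fun k => Finset.univ.sup' hneu (sval k) + R with hBIGdef
  have hBIG_ge : ∀ k u, sval k u + R ≤ BIG k := by
    intro k u
    have : sval k u ≤ Finset.univ.sup' hneu (sval k) := Finset.le_sup' _ (Finset.mem_univ _)
    have hBe : BIG k = Finset.univ.sup' hneu (sval k) + R := rfl
    omega
  set bnd : (Fin n ⊕ Fin n) → ℕ × Fin n :=
    Sum.elim (fun i => ((0 : ℕ), i)) (fun i => (ℓ, i)) with hbnddef
  set S : ℕ → ℕ × Fin n → Set ℤ := fun k x =>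
    {m | (∃ z d, Reach ℓ Gs z x d ∧ m = BIG k - d) ∨
         (∃ u d, Reach ℓ Gs (bnd u) x d ∧ m = sval k u - d)} with hSdef
  have hSmem : ∀ k x m, m ∈ S k x ↔
      ((∃ z d, Reach ℓ Gs z x d ∧ m = BIG k - d) ∨
       (∃ u d, Reach ℓ Gs (bnd u) x d ∧ m = sval k u - d)) := fun _ _ _ => Iff.rfl
  have hSne : ∀ k x, (S k x).Nonempty := by
    intro k x
    exact ⟨BIG k, Or.inl ⟨x, 0, Reach.refl x, by simp⟩⟩
  have hSbdd : ∀ k x, BddBelow (S k x) := by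
    intro k x
    refine ⟨min (BIG k) (Finset.univ.inf' hneu (sval k)) - R, ?_⟩
    rintro m (⟨z, d, hr, rfl⟩ | ⟨u, d, hr, rfl⟩)
    · have h1 := hdR hr
      have h2 : min (BIG k) (Finset.univ.inf' hneu (sval k)) ≤ BIG k := min_le_left _ _
      omega
    · have h1 := hdR hr
      have h2 : Finset.univ.inf' hneu (sval k) ≤ sval k u := Finset.inf'_le _ (Finset.mem_univ _)
      have h3 : min (BIG k) (Finset.univ.inf' hneu (sval k)) ≤ Finset.univ.inf' hneu (sval k) :=
        min_le_right _ _
      omega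
  set f : ℕ → ℕ × Fin n → ℤ := fun k x => sInf (S k x) with hfdef
  have hfInf : ∀ k x, f k x = sInf (S k x) := fun _ _ => rfl
  -- the filled assignment satisfies each arc
  have hedge : ∀ k t, t < ℓ → ∀ u v b, Gs t u v b →
      f k (emb t v) + ((cond b 1 0 : ℕ) : ℤ) ≤ f k (emb t u) := by
    intro k t ht u v b hG
    have hmem := Int.csInf_mem (hSne k (emb t u)) (hSbdd k (emb t u))
    have hE : Edge ℓ Gs (emb t u) (emb t v) b := ⟨t, ht, u, v, hG, rfl, rfl⟩
    rw [hSmem] at hmem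
    have hmem2 : f k (emb t u) - ((cond b 1 0 : ℕ) : ℤ) ∈ S k (emb t v) := by
      rw [hSmem]
      rcases hmem with ⟨z, d, hr, he⟩ | ⟨w, d, hr, he⟩
      · refine Or.inl ⟨z, d + cond b 1 0, hr.step hE, ?_⟩
        rw [hfInf, he]
        push_cast
        ring
      · refine Or.inr ⟨w, d + cond b 1 0, hr.step hE, ?_⟩
        rw [hfInf, he]
        push_cast
        ring
    have h3 := csInf_le (hSbdd k (emb t v)) hmem2
    rw [← hfInf] at h3
    omega
  -- the filled assignment agrees with the scaled σ on the boundary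
  have hbd : ∀ k u, f k (bnd u) = sval k u := by
    intro k u
    rw [hfInf]
    apply le_antisymm
    · apply csInf_le (hSbdd _ _)
      rw [hSmem]
      exact Or.inr ⟨u, 0, Reach.refl _, by simp⟩
    · apply le_csInf (hSne _ _)
      intro m hm
      rw [hSmem] at hm
      rcases hm with ⟨z, d, hr, rfl⟩ | ⟨w, d, hr, rfl⟩
      · have h1 := hdR hr
        have h2 := hBIG_ge k u
        omega
      · have hent : ∀ ρ : ℕ → Fin n → ℤ, (∀ t < ℓ, MCSat (Gs t) (ρ t) (ρ (t + 1))) →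
            Sum.elim (ρ 0) (ρ ℓ) u + (d : ℤ) ≤ Sum.elim (ρ 0) (ρ ℓ) w := by
          intro ρ hρ
          have h1 := reach_bound ρ hρ hr
          have e1 : ∀ v : Fin n ⊕ Fin n, Sum.elim (ρ 0) (ρ ℓ) v = ρ (bnd v).1 (bnd v).2 := by
            intro v; cases v <;> rfl
          rw [e1 u, e1 w]
          exact h1
        rcases Nat.eq_zero_or_pos d with hd | hd
        · subst hd
          have hG : Gcol w u false := by
            rw [hcol]
            intro ρ hρ
            have h1 := hent ρ hρ
            simp only [CmpB, Bool.false_eq_true, if_false]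
            push_cast at h1
            linarith
          have hs := hσ k w u false hG
          simp only [CmpB, Bool.false_eq_true, if_false] at hs
          have h2 := mul_le_mul_of_nonneg_left hs (le_of_lt hC0)
          rw [hsval_eq, hsval_eq]
          push_cast
          linarith
        · have hG : Gcol w u true := by
            rw [hcol]
            intro ρ hρ
            have h1 := hent ρ hρ
            simp only [CmpB, if_true]
            have hd1 : (1 : ℤ) ≤ (d : ℤ) := by exact_mod_cast hd
            linarith
          have hs := hσ k w u true hG
          simp only [CmpB, if_true] at hs
          have hs1 : Sum.elim (σ k) (σ (k + 1)) u ≤ Sum.elim (σ k) (σ (k + 1)) w - 1 := by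
            linarith
          have h2 := mul_le_mul_of_nonneg_left hs1 (le_of_lt hC0)
          rw [mul_sub, mul_one] at h2
          have h3 := hdR hr
          rw [hsval_eq, hsval_eq]
          have hdC : (d : ℤ) ≤ C := by omega
          linarith
  -- assemble the global assignment
  refine ⟨fun m i => f (m / ℓ) (m % ℓ, i), ?_⟩
  intro m u v b hG
  have ht : m % ℓ < ℓ := Nat.mod_lt _ (by omega)
  have hsplit : m % ℓ + ℓ * (m / ℓ) = m := Nat.mod_add_div m ℓ
  have key : ∀ w : Fin n ⊕ Fin n,
      Sum.elim (fun i => f (m / ℓ) (m % ℓ, i)) (fun i => f ((m + 1) / ℓ) ((m + 1) % ℓ, i)) w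
        = f (m / ℓ) (emb (m % ℓ) w) := by
    intro w
    cases w with
    | inl i => rfl
    | inr i =>
      show f ((m + 1) / ℓ) ((m + 1) % ℓ, i) = f (m / ℓ) (m % ℓ + 1, i)
      rcases Nat.lt_or_ge (m % ℓ + 1) ℓ with h | h
      · have hm1 : m + 1 = (m % ℓ + 1) + ℓ * (m / ℓ) := by omega
        have e1 : (m + 1) % ℓ = m % ℓ + 1 := by
          rw [hm1, Nat.add_mul_mod_self_left, Nat.mod_eq_of_lt h]
        have e2 : (m + 1) / ℓ = m / ℓ := by
          rw [hm1, Nat.add_mul_div_left _ _ (by omega : 0 < ℓ), Nat.div_eq_of_lt h, Nat.zero_add]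
        rw [e1, e2]
      · have h' : m % ℓ + 1 = ℓ := by omega
        have hmul : ℓ * (m / ℓ + 1) = ℓ * (m / ℓ) + ℓ := by ring
        have hm1 : m + 1 = 0 + ℓ * (m / ℓ + 1) := by omega
        have e1 : (m + 1) % ℓ = 0 := by
          rw [hm1, Nat.add_mul_mod_self_left, Nat.zero_mod]
        have e2 : (m + 1) / ℓ = m / ℓ + 1 := by
          rw [hm1, Nat.add_mul_div_left _ _ (by omega : 0 < ℓ), Nat.zero_div, Nat.zero_add]
        rw [e1, e2, h']
        have b1 : f (m / ℓ + 1) ((0 : ℕ), i) = sval (m / ℓ + 1) (Sum.inl i) :=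
          hbd (m / ℓ + 1) (Sum.inl i)
        have b2 : f (m / ℓ) (ℓ, i) = sval (m / ℓ) (Sum.inr i) := hbd (m / ℓ) (Sum.inr i)
        rw [b1, b2, hsval_eq, hsval_eq, Sum.elim_inl, Sum.elim_inr]
  have hE := hedge (m / ℓ) (m % ℓ) ht u v b hG
  show CmpB (fun i => f (m / ℓ) (m % ℓ, i)) (fun i => f ((m + 1) / ℓ) ((m + 1) % ℓ, i)) u v b
  unfold CmpB
  rw [key u, key v]
  cases b with
  | false =>
    simp only [Bool.false_eq_true, if_false]
    simpa using hE
  | true =>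
    simp only [if_true]
    have : f (m / ℓ) (emb (m % ℓ) v) + 1 ≤ f (m / ℓ) (emb (m % ℓ) u) := by simpa using hE
    omega
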